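/- Let (ε_k)_{k≥1} be i.i.d. real random variables with mean zero and variance σ² ∈ (0, ∞). Then h_n(ε_1, …, ε_n) → 1 almost surely as n → ∞ (evaluated on the almost-sure event that (ε_1,…,ε_n) ≠ 0 for n large). -/

import Mathlib

open MeasureTheory ProbabilityTheory Filter

/-- The Hoyer sparsity index of the vector `(x 0, …, x (n-1))`:
`h_n(x) = (√n - |Σ_{k<n} x k| / ‖x‖₂) / (√n - 1)`. -/
noncomputable def hoyerSeq (n : ℕ) (x : ℕ → ℝ) : ℝ :=
  (Real.sqrt n -
      |∑ k ∈ Finset.range n, x k| / Real.sqrt (∑ k ∈ Finset.range n, (x k) ^ 2)) /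
    (Real.sqrt n - 1)

/-- Rate-free form of Lemma 2: for i.i.d. mean-zero noise with variance `σ² ∈ (0,∞)`,
the Hoyer index `h_n(ε₁,…,ε_n)` converges to `1` almost surely, i.e. a white-noise
matrix is asymptotically as sparse as a blank matrix. -/
theorem hoyer_whiteNoise_tendsto_one_as
    {Ω : Type*} [MeasureSpace Ω] [IsProbabilityMeasure (ℙ : Measure Ω)]
    (ε : ℕ → Ω → ℝ) (σ2 : ℝ) (hσ2 : 0 < σ2)
    (hmeas : ∀ k, Measurable (ε k))
    (hindep : iIndepFun ε ℙ)
    (hident : ∀ k, Measure.map (ε k) ℙ = Measure.map (ε 0) ℙ)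
    (hint : ∀ k, Integrable (ε k) ℙ)
    (hmean : ∀ k, ∫ ω, ε k ω = 0)
    (hsqint : ∀ k, Integrable (fun ω => (ε k ω) ^ 2) ℙ)
    (hvar : ∀ k, ∫ ω, (ε k ω) ^ 2 = σ2) :
    ∀ᵐ ω ∂(ℙ : Measure Ω),
      Tendsto (fun n : ℕ => hoyerSeq n (fun k => ε k ω)) atTop (nhds 1) := by
  have hsq : Measurable fun x : ℝ => x ^ 2 := measurable_id.pow_const 2
  have hid : ∀ k, IdentDistrib (ε k) (ε 0) ℙ ℙ := fun k =>
    ⟨(hmeas k).aemeasurable, (hmeas 0).aemeasurable, hident k⟩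
  have hpind : Pairwise (Function.onFun (IndepFun · · (ℙ : Measure Ω)) ε) :=
    fun i j hij => hindep.indepFun hij
  have slln1 := strong_law_ae_real ε (hint 0) hpind hid
  rw [hmean 0] at slln1
  have slln2 := strong_law_ae_real (fun k ω => (ε k ω) ^ 2) (hsqint 0)
    (fun i j hij => (hpind hij).comp hsq hsq)
    (fun k => (hid k).comp hsq)
  rw [hvar 0] at slln2
  filter_upwards [slln1, slln2] with ω hA hQ
  set A : ℕ → ℝ := fun n => (∑ i ∈ Finset.range n, ε i ω) / n with hAdef
  set Q : ℕ → ℝ := fun n => (∑ i ∈ Finset.range n, (ε i ω) ^ 2) / n with hQdef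
  have hQpos : ∀ᶠ n in atTop, 0 < Q n :=
    hQ.eventually (eventually_gt_nhds hσ2)
  have hsqrtQ : Tendsto (fun n => Real.sqrt (Q n)) atTop (nhds (Real.sqrt σ2)) :=
    (Real.continuous_sqrt.continuousAt).tendsto.comp hQ
  have hsqrtσ : Real.sqrt σ2 ≠ 0 := ne_of_gt (Real.sqrt_pos.2 hσ2)
  have habs : Tendsto (fun n => |A n|) atTop (nhds 0) := by
    simpa using hA.abs
  have hnum : Tendsto (fun n => 1 - |A n| / Real.sqrt (Q n)) atTop (nhds 1) := by
    have := habs.div hsqrtQ hsqrtσ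
    simpa using (tendsto_const_nhds (x := (1:ℝ))).sub this
  have hinv : Tendsto (fun n : ℕ => 1 / Real.sqrt n) atTop (nhds 0) := by
    have h0 : Tendsto (fun n : ℕ => (1 : ℝ) / n) atTop (nhds 0) :=
      tendsto_one_div_atTop_nhds_zero_nat
    have := (Real.continuous_sqrt.continuousAt (x := (0:ℝ))).tendsto.comp h0
    rw [Real.sqrt_zero] at this
    refine this.congr fun n => ?_
    simp [Function.comp, one_div, Real.sqrt_inv]
  have hden : Tendsto (fun n : ℕ => 1 - 1 / Real.sqrt n) atTop (nhds 1) := by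
    simpa using (tendsto_const_nhds (x := (1:ℝ))).sub hinv
  have hlim : Tendsto (fun n : ℕ =>
      (1 - |A n| / Real.sqrt (Q n)) / (1 - 1 / Real.sqrt n)) atTop (nhds 1) := by
    simpa [Pi.div_def] using hnum.div hden one_ne_zero
  refine hlim.congr' ?_
  filter_upwards [hQpos, eventually_ge_atTop 2] with n hQn hn2
  have hn0 : (0:ℝ) < n := by positivity
  have hsn : (0:ℝ) < Real.sqrt n := Real.sqrt_pos.2 hn0
  have hsn1 : (1:ℝ) < Real.sqrt n := by
    have : (1:ℝ) < (n:ℝ) := by exact_mod_cast hn2.trans_lt' one_lt_two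
    calc (1:ℝ) = Real.sqrt 1 := (Real.sqrt_one).symm
    _ < Real.sqrt n := Real.sqrt_lt_sqrt zero_le_one this
  have hsQ : (0:ℝ) < Real.sqrt (Q n) := Real.sqrt_pos.2 hQn
  have hsum : ∑ i ∈ Finset.range n, ε i ω = n * A n := by
    simp only [hAdef]
    field_simp
  have hsumsq : ∑ i ∈ Finset.range n, (ε i ω) ^ 2 = n * Q n := by
    simp only [hQdef]
    field_simp
  have hsqrtmul : Real.sqrt (∑ i ∈ Finset.range n, (ε i ω) ^ 2)
      = Real.sqrt n * Real.sqrt (Q n) := by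
    rw [hsumsq, Real.sqrt_mul hn0.le]
  have habsn : |∑ i ∈ Finset.range n, ε i ω|
      = Real.sqrt n * Real.sqrt n * |A n| := by
    rw [hsum, abs_mul, abs_of_pos hn0, Real.mul_self_sqrt hn0.le]
  rw [hoyerSeq, habsn, hsqrtmul]
  generalize |A n| = a
  generalize hq : Real.sqrt (Q n) = q at hsQ
  generalize hs : Real.sqrt (n : ℝ) = s at hsn hsn1
  have hs0 : s ≠ 0 := ne_of_gt hsn
  have hq0 : q ≠ 0 := ne_of_gt hsQ
  have hs1 : s - 1 ≠ 0 := sub_ne_zero.2 (ne_of_gt hsn1)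
  have hd : 1 - 1 / s ≠ 0 := by
    rw [sub_ne_zero]
    intro h
    exact hs1 (by field_simp at h; linarith)
  field_simp
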